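/- Let n, k ≥ 1, I_{n,n} = diag(1ₙ,−1ₙ), S = [[0,1ₙ],[1ₙ,0]], and J_k = [[0,1_k],[−1_k,0]]. Define μ : Mat_{2n×k}(ℂ) → Mat_{2n}(ℂ) by μ(v) = −(i/2)(v v* I_{n,n} − S (v v* I_{n,n})ᵀ S). Then: (a) μ(v)* I_{n,n} + I_{n,n} μ(v) = 0 and μ(v)ᵀ S + S μ(v) = 0 for all v (μ takes values in o*(2n)); (b) μ(g v) = g μ(v) g⁻¹ for every g with g* I_{n,n} g = I_{n,n} and gᵀ S g = S; (c) writing v = (v′; v″) with v′, v″ ∈ Mat_{n×k}(ℂ) and v₊ = [v′, conj(v″)] ∈ Mat_{n×2k}(ℂ), one has μ(v) = −(i/2)·[[v₊ v₊*, −v₊ J_k v₊ᵀ],[−conj(v₊) J_k v₊*, −conj(v₊) v₊ᵀ]], and this block matrix is unchanged when v₊ is replaced by v₊ H for any H ∈ Mat_{2k}(ℂ) with Hᵀ J_k H = J_k and H* H = 1_{2k} (Sp(k)-invariance). -/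

import Mathlib

open Matrix

/-- The matrix `I_{n,n} = diag(1ₙ, −1ₙ)`. -/
noncomputable def Inn (n : ℕ) : Matrix (Fin n ⊕ Fin n) (Fin n ⊕ Fin n) ℂ :=
  Matrix.fromBlocks 1 0 0 (-1)

/-- The matrix `S = [[0,1ₙ],[1ₙ,0]]`. -/
noncomputable def Smat (n : ℕ) : Matrix (Fin n ⊕ Fin n) (Fin n ⊕ Fin n) ℂ :=
  Matrix.fromBlocks 0 1 1 0

/-- The matrix `J_k = [[0,1_k],[−1_k,0]]`. -/
noncomputable def Jk (k : ℕ) : Matrix (Fin k ⊕ Fin k) (Fin k ⊕ Fin k) ℂ :=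
  Matrix.fromBlocks 0 1 (-1) 0

/-- The moment map `μ(v) = −(i/2)(v v* I_{n,n} − S (v v* I_{n,n})ᵀ S)` on
`W^k = Mat_{2n×k}(ℂ)`. -/
noncomputable def momentOstarK (n k : ℕ) (v : Matrix (Fin n ⊕ Fin n) (Fin k) ℂ) :
    Matrix (Fin n ⊕ Fin n) (Fin n ⊕ Fin n) ℂ :=
  (-(Complex.I / 2)) •
    (v * vᴴ * Inn n - Smat n * (v * vᴴ * Inn n)ᵀ * Smat n)

/-- For `v = (v′; v″)` with `v′, v″ ∈ Mat_{n×k}(ℂ)`, the matrix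
`v₊ = [v′, conj(v″)] ∈ Mat_{n×2k}(ℂ)`. -/
noncomputable def vPlusK (n k : ℕ) (v : Matrix (Fin n ⊕ Fin n) (Fin k) ℂ) :
    Matrix (Fin n) (Fin k ⊕ Fin k) ℂ :=
  Matrix.of fun i c =>
    Sum.elim (fun a => v (Sum.inl i) a) (fun a => starRingEnd ℂ (v (Sum.inr i) a)) c

/-- The block matrix `−(i/2)·[[M M*, −M J_k Mᵀ],[−conj(M) J_k M*, −conj(M) Mᵀ]]`. -/
noncomputable def blockMomentK (n k : ℕ) (M : Matrix (Fin n) (Fin k ⊕ Fin k) ℂ) :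
    Matrix (Fin n ⊕ Fin n) (Fin n ⊕ Fin n) ℂ :=
  (-(Complex.I / 2)) •
    Matrix.fromBlocks (M * Mᴴ) (-(M * Jk k * Mᵀ))
      (-(M.map (starRingEnd ℂ) * Jk k * Mᴴ)) (-(M.map (starRingEnd ℂ) * Mᵀ))

section Aux

private lemma hI2 (n : ℕ) : Inn n * Inn n = 1 := by
  simp [Inn, Matrix.fromBlocks_multiply, ← Matrix.fromBlocks_one]
private lemma hS2 (n : ℕ) : Smat n * Smat n = 1 := by
  simp [Smat, Matrix.fromBlocks_multiply, ← Matrix.fromBlocks_one]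
private lemma hIT (n : ℕ) : (Inn n)ᵀ = Inn n := by
  simp [Inn, Matrix.fromBlocks_transpose]
private lemma hST (n : ℕ) : (Smat n)ᵀ = Smat n := by
  simp [Smat, Matrix.fromBlocks_transpose]
private lemma hIH (n : ℕ) : (Inn n)ᴴ = Inn n := by
  simp [Inn, Matrix.fromBlocks_conjTranspose]
private lemma hSH (n : ℕ) : (Smat n)ᴴ = Smat n := by
  simp [Smat, Matrix.fromBlocks_conjTranspose]
private lemma hIS (n : ℕ) : Inn n * Smat n = -(Smat n * Inn n) := by
  simp [Inn, Smat, Matrix.fromBlocks_multiply, Matrix.fromBlocks_neg]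

private lemma mapJ (k : ℕ) : (Jk k).map (starRingEnd ℂ) = Jk k := by
  ext (i | i) (j | j) <;> simp [Jk, Matrix.one_apply, apply_ite]

private lemma l_TH {m l : Type*} (X : Matrix m l ℂ) : Xᵀᴴ = X.map (starRingEnd ℂ) := by
  ext i j; simp
private lemma l_HT {m l : Type*} (X : Matrix m l ℂ) : Xᴴᵀ = X.map (starRingEnd ℂ) := by
  ext i j; simp
private lemma l_mapH {m l : Type*} (X : Matrix m l ℂ) :
    (X.map (starRingEnd ℂ))ᴴ = Xᵀ := by
  ext i j; simp
private lemma l_mapT {m l : Type*} (X : Matrix m l ℂ) :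
    (X.map (starRingEnd ℂ))ᵀ = Xᴴ := by
  ext i j; simp
private lemma l_Hmap {m l : Type*} (X : Matrix m l ℂ) :
    Xᴴ.map (starRingEnd ℂ) = Xᵀ := by
  ext i j; simp
private lemma l_mapmap {m l : Type*} (X : Matrix m l ℂ) :
    (X.map (starRingEnd ℂ)).map (starRingEnd ℂ) = X := by
  ext i j; simp

/-- Key commutation identity for part (a), first relation. -/
private lemma keyA (n : ℕ) (X Y : Matrix (Fin n ⊕ Fin n) (Fin n ⊕ Fin n) ℂ) :
    (Inn n * X - Smat n * (Y * Inn n) * Smat n) * Inn n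
      = Inn n * (X * Inn n - Smat n * (Inn n * Y) * Smat n) := by
  have l1 : Smat n * (Y * Inn n) * Smat n * Inn n = -(Smat n * Y * Smat n) := by
    calc Smat n * (Y * Inn n) * Smat n * Inn n
        = Smat n * Y * (Inn n * Smat n) * Inn n := by noncomm_ring
      _ = Smat n * Y * (-(Smat n * Inn n)) * Inn n := by rw [hIS]
      _ = -(Smat n * Y * Smat n * (Inn n * Inn n)) := by noncomm_ring
      _ = -(Smat n * Y * Smat n) := by rw [hI2, mul_one]
  have l2 : Inn n * (Smat n * (Inn n * Y) * Smat n) = -(Smat n * Y * Smat n) := by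
    calc Inn n * (Smat n * (Inn n * Y) * Smat n)
        = (Inn n * Smat n) * Inn n * Y * Smat n := by noncomm_ring
      _ = (-(Smat n * Inn n)) * Inn n * Y * Smat n := by rw [hIS]
      _ = -(Smat n * (Inn n * Inn n) * Y * Smat n) := by noncomm_ring
      _ = -(Smat n * Y * Smat n) := by rw [hI2, mul_one]
  rw [sub_mul, mul_sub, l1, l2]
  noncomm_ring

/-- Key identity for part (a), second relation. -/
private lemma keyB (n : ℕ) (X Y : Matrix (Fin n ⊕ Fin n) (Fin n ⊕ Fin n) ℂ) :
    (Inn n * Y - Smat n * (X * Inn n) * Smat n) * Smat n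
      + Smat n * (X * Inn n - Smat n * (Inn n * Y) * Smat n) = 0 := by
  have l1 : Smat n * (X * Inn n) * Smat n * Smat n = Smat n * (X * Inn n) := by
    calc Smat n * (X * Inn n) * Smat n * Smat n
        = Smat n * (X * Inn n) * (Smat n * Smat n) := by noncomm_ring
      _ = Smat n * (X * Inn n) := by rw [hS2, mul_one]
  have l2 : Smat n * (Smat n * (Inn n * Y) * Smat n) = Inn n * Y * Smat n := by
    calc Smat n * (Smat n * (Inn n * Y) * Smat n)
        = (Smat n * Smat n) * (Inn n * Y * Smat n) := by noncomm_ring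
      _ = Inn n * Y * Smat n := by rw [hS2, one_mul]
  rw [sub_mul, mul_sub, l1, l2]
  noncomm_ring

end Aux

/-- Part (c) in terms of explicit row blocks. -/
private lemma part_c (n k : ℕ) (A B : Matrix (Fin n) (Fin k) ℂ) :
    momentOstarK n k (Matrix.fromRows A B)
      = blockMomentK n k (Matrix.fromCols A (B.map (starRingEnd ℂ))) := by
  rw [momentOstarK, blockMomentK]
  congr 1
  rw [Matrix.conjTranspose_fromRows_eq_fromCols_conjTranspose,
    Matrix.fromRows_mul_fromCols]
  rw [show Inn n = Matrix.fromBlocks 1 0 0 (-1) from rfl,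
    show Smat n = Matrix.fromBlocks 0 1 1 0 from rfl,
    show Jk k = Matrix.fromBlocks 0 1 (-1) 0 from rfl]
  rw [Matrix.fromBlocks_multiply, Matrix.fromBlocks_transpose, Matrix.fromBlocks_multiply,
    Matrix.fromBlocks_multiply]
  -- RHS
  rw [Matrix.conjTranspose_fromCols_eq_fromRows_conjTranspose,
    Matrix.transpose_fromCols]
  rw [show (Matrix.fromCols A (B.map (starRingEnd ℂ))).map (starRingEnd ℂ)
      = Matrix.fromCols (A.map (starRingEnd ℂ)) B by
    rw [← l_mapmap B]
    ext i (c | c) <;> simp [Matrix.fromCols]]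
  rw [Matrix.fromCols_mul_fromRows, Matrix.fromCols_mul_fromBlocks,
    Matrix.fromCols_mul_fromBlocks, Matrix.fromCols_mul_fromRows,
    Matrix.fromCols_mul_fromRows, Matrix.fromCols_mul_fromRows]
  simp only [Matrix.mul_zero, Matrix.zero_mul, Matrix.mul_one, Matrix.one_mul,
    Matrix.mul_neg, Matrix.neg_mul,
    add_zero, zero_add, Matrix.transpose_mul, Matrix.conjTranspose_mul,
    l_TH, l_HT, l_mapH, l_mapT, l_mapmap, Matrix.transpose_zero, Matrix.transpose_one,
    Matrix.transpose_neg, neg_neg, Matrix.conjTranspose_conjTranspose,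
    Matrix.transpose_transpose]
  rw [sub_eq_add_neg, Matrix.fromBlocks_neg, Matrix.fromBlocks_add]
  congr 1 <;> abel

private lemma part_a (n k : ℕ) (v : Matrix (Fin n ⊕ Fin n) (Fin k) ℂ) :
    (momentOstarK n k v)ᴴ * Inn n + Inn n * momentOstarK n k v = 0 ∧
    (momentOstarK n k v)ᵀ * Smat n + Smat n * momentOstarK n k v = 0 := by
  have hBH : (v * vᴴ)ᴴ = v * vᴴ := by
    rw [Matrix.conjTranspose_mul, Matrix.conjTranspose_conjTranspose]
  have hmu : momentOstarK n k v = (-(Complex.I / 2)) •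
      (v * vᴴ * Inn n - Smat n * (Inn n * (v * vᴴ)ᵀ) * Smat n) := by
    rw [momentOstarK, Matrix.transpose_mul, hIT]
  have hAH : (v * vᴴ * Inn n - Smat n * (Inn n * (v * vᴴ)ᵀ) * Smat n)ᴴ
      = Inn n * (v * vᴴ) - Smat n * ((v * vᴴ)ᵀ * Inn n) * Smat n := by
    simp only [Matrix.conjTranspose_sub, Matrix.conjTranspose_mul, hIH, hSH, hBH,
      l_TH, l_HT]
    rw [show (v * vᴴ).map (starRingEnd ℂ) = (v * vᴴ)ᵀ by
      rw [← l_HT, hBH]]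
    noncomm_ring
  have hAT : (v * vᴴ * Inn n - Smat n * (Inn n * (v * vᴴ)ᵀ) * Smat n)ᵀ
      = Inn n * (v * vᴴ)ᵀ - Smat n * ((v * vᴴ) * Inn n) * Smat n := by
    simp only [Matrix.transpose_sub, Matrix.transpose_mul, hIT, hST,
      Matrix.transpose_transpose]
    noncomm_ring
  constructor
  · rw [hmu, Matrix.conjTranspose_smul, Matrix.smul_mul, Matrix.mul_smul,
      hAH]
    rw [show (Inn n * (v * vᴴ) - Smat n * ((v * vᴴ)ᵀ * Inn n) * Smat n) * Inn n
        = Inn n * (v * vᴴ * Inn n - Smat n * (Inn n * (v * vᴴ)ᵀ) * Smat n) from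
      keyA n (v * vᴴ) ((v * vᴴ)ᵀ)]
    rw [← add_smul]
    rw [show star (-(Complex.I / 2)) + (-(Complex.I / 2)) = 0 by
      simp [Complex.ext_iff]; norm_num]
    rw [zero_smul]
  · rw [hmu, Matrix.transpose_smul, Matrix.smul_mul, Matrix.mul_smul, hAT, ← smul_add]
    rw [show (Inn n * (v * vᴴ)ᵀ - Smat n * (v * vᴴ * Inn n) * Smat n) * Smat n
        + Smat n * (v * vᴴ * Inn n - Smat n * (Inn n * (v * vᴴ)ᵀ) * Smat n) = 0 from
      keyB n (v * vᴴ) ((v * vᴴ)ᵀ)]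
    rw [smul_zero]

private lemma part_b (n k : ℕ) (g : Matrix (Fin n ⊕ Fin n) (Fin n ⊕ Fin n) ℂ)
    (hg1 : gᴴ * Inn n * g = Inn n) (hg2 : gᵀ * Smat n * g = Smat n)
    (v : Matrix (Fin n ⊕ Fin n) (Fin k) ℂ) :
    momentOstarK n k (g * v) = g * momentOstarK n k v * g⁻¹ := by
  set h := Inn n * gᴴ * Inn n with hh
  have hhg : h * g = 1 := by
    calc h * g = Inn n * (gᴴ * Inn n * g) := by rw [hh]; noncomm_ring
      _ = Inn n * Inn n := by rw [hg1]
      _ = 1 := hI2 n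
  have hgh : g * h = 1 := mul_eq_one_comm.mpr hhg
  have hinv : g⁻¹ = h := Matrix.inv_eq_right_inv hgh
  have e1 : gᴴ * Inn n = Inn n * h := by
    have h1 : gᴴ * Inn n * g * h = Inn n * h := by rw [hg1]
    rwa [mul_assoc, hgh, mul_one] at h1
  have e2 : gᵀ * Smat n = Smat n * h := by
    have h1 : gᵀ * Smat n * g * h = Smat n * h := by rw [hg2]
    rwa [mul_assoc, hgh, mul_one] at h1
  have e4 : Inn n * (gᴴ)ᵀ = hᵀ * Inn n := by
    have := congrArg Matrix.transpose e1
    rwa [Matrix.transpose_mul, Matrix.transpose_mul, hIT] at this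
  have e3 : Smat n * hᵀ = g * Smat n := by
    have h3 : Smat n * g = hᵀ * Smat n := by
      have := congrArg Matrix.transpose e2
      rwa [Matrix.transpose_mul, Matrix.transpose_mul, hST, Matrix.transpose_transpose]
        at this
    have h4 : hᵀ = Smat n * g * Smat n := by
      calc hᵀ = hᵀ * (Smat n * Smat n) := by rw [hS2, mul_one]
        _ = (hᵀ * Smat n) * Smat n := by noncomm_ring
        _ = (Smat n * g) * Smat n := by rw [← h3]
    rw [h4]
    calc Smat n * (Smat n * g * Smat n) = (Smat n * Smat n) * (g * Smat n) := by noncomm_ring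
      _ = g * Smat n := by rw [hS2, one_mul]
  rw [hinv, momentOstarK, momentOstarK]
  have hgv : g * v * (g * v)ᴴ = g * (v * vᴴ) * gᴴ := by
    rw [Matrix.conjTranspose_mul]
    rw [Matrix.mul_assoc, Matrix.mul_assoc, ← Matrix.mul_assoc v]
  rw [hgv, Matrix.mul_smul, Matrix.smul_mul]
  congr 1
  set W := v * vᴴ with hW
  have ht : (g * W * gᴴ * Inn n)ᵀ = Inn n * (gᴴ)ᵀ * Wᵀ * gᵀ := by
    simp only [Matrix.transpose_mul, hIT]
    noncomm_ring
  have hWT : (W * Inn n)ᵀ = Inn n * Wᵀ := by rw [Matrix.transpose_mul, hIT]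
  rw [ht, hWT]
  have t1 : g * W * gᴴ * Inn n = g * (W * Inn n) * h := by
    calc g * W * gᴴ * Inn n = g * W * (gᴴ * Inn n) := by noncomm_ring
      _ = g * W * (Inn n * h) := by rw [e1]
      _ = g * (W * Inn n) * h := by noncomm_ring
  have t2 : Smat n * (Inn n * (gᴴ)ᵀ * Wᵀ * gᵀ) * Smat n
      = g * (Smat n * (Inn n * Wᵀ) * Smat n) * h := by
    calc Smat n * (Inn n * (gᴴ)ᵀ * Wᵀ * gᵀ) * Smat n
        = Smat n * (Inn n * (gᴴ)ᵀ) * Wᵀ * (gᵀ * Smat n) := by noncomm_ring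
      _ = Smat n * (hᵀ * Inn n) * Wᵀ * (Smat n * h) := by rw [e4, e2]
      _ = (Smat n * hᵀ) * Inn n * Wᵀ * Smat n * h := by noncomm_ring
      _ = (g * Smat n) * Inn n * Wᵀ * Smat n * h := by rw [e3]
      _ = g * (Smat n * (Inn n * Wᵀ) * Smat n) * h := by noncomm_ring
  rw [t1, t2]
  noncomm_ring

private lemma part_d (n k : ℕ) (H : Matrix (Fin k ⊕ Fin k) (Fin k ⊕ Fin k) ℂ)
    (hJ : Hᵀ * Jk k * H = Jk k) (hH : Hᴴ * H = 1)
    (M : Matrix (Fin n) (Fin k ⊕ Fin k) ℂ) :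
    blockMomentK n k (M * H) = blockMomentK n k M := by
  have hHH : H * Hᴴ = 1 := mul_eq_one_comm.mp hH
  have hmapH : H.map (starRingEnd ℂ) * Hᵀ = 1 := by
    have := congrArg (fun X => X.map (starRingEnd ℂ)) hHH
    simp only [Matrix.map_mul] at this
    rwa [l_Hmap H,
      show (1 : Matrix (Fin k ⊕ Fin k) (Fin k ⊕ Fin k) ℂ).map (starRingEnd ℂ) = 1 by
        ext i j; simp [Matrix.one_apply, apply_ite]] at this
  have hHcJ : H.map (starRingEnd ℂ) * Jk k * Hᴴ = Jk k := by
    calc H.map (starRingEnd ℂ) * Jk k * Hᴴ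
        = H.map (starRingEnd ℂ) * (Hᵀ * Jk k * H) * Hᴴ := by rw [hJ]
      _ = (H.map (starRingEnd ℂ) * Hᵀ) * Jk k * (H * Hᴴ) := by noncomm_ring
      _ = Jk k := by rw [hmapH, hHH, one_mul, mul_one]
  have hHJT : H * Jk k * Hᵀ = Jk k := by
    have := congrArg (fun X => X.map (starRingEnd ℂ)) hHcJ
    simp only [Matrix.map_mul] at this
    rwa [l_mapmap, mapJ, l_Hmap H] at this
  -- right-assoc rewrite rules
  have rHH : ∀ X : Matrix (Fin k ⊕ Fin k) (Fin n) ℂ, H * (Hᴴ * X) = X := fun X => by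
    rw [← Matrix.mul_assoc, hHH, Matrix.one_mul]
  have rJT : ∀ X : Matrix (Fin k ⊕ Fin k) (Fin n) ℂ,
      H * (Jk k * (Hᵀ * X)) = Jk k * X := fun X => by
    rw [← Matrix.mul_assoc, ← Matrix.mul_assoc, hHJT]
  have rcJ : ∀ X : Matrix (Fin k ⊕ Fin k) (Fin n) ℂ,
      H.map (starRingEnd ℂ) * (Jk k * (Hᴴ * X)) = Jk k * X := fun X => by
    rw [← Matrix.mul_assoc, ← Matrix.mul_assoc, hHcJ]
  have rcT : ∀ X : Matrix (Fin k ⊕ Fin k) (Fin n) ℂ,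
      H.map (starRingEnd ℂ) * (Hᵀ * X) = X := fun X => by
    rw [← Matrix.mul_assoc, hmapH, Matrix.one_mul]
  rw [blockMomentK, blockMomentK]
  simp only [Matrix.conjTranspose_mul, Matrix.transpose_mul, Matrix.map_mul,
    Matrix.mul_assoc, rHH, rJT, rcJ, rcT]

theorem moment_map_ostar_k (n k : ℕ) (hn : 1 ≤ n) (hk : 1 ≤ k) :
    -- (a) `μ` takes values in `o*(2n)`
    (∀ v : Matrix (Fin n ⊕ Fin n) (Fin k) ℂ,
      (momentOstarK n k v)ᴴ * Inn n + Inn n * momentOstarK n k v = 0 ∧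
      (momentOstarK n k v)ᵀ * Smat n + Smat n * momentOstarK n k v = 0) ∧
    -- (b) `O*(2n)`-equivariance
    (∀ g : Matrix (Fin n ⊕ Fin n) (Fin n ⊕ Fin n) ℂ,
      gᴴ * Inn n * g = Inn n → gᵀ * Smat n * g = Smat n →
      ∀ v : Matrix (Fin n ⊕ Fin n) (Fin k) ℂ,
        momentOstarK n k (g * v) = g * momentOstarK n k v * g⁻¹) ∧
    -- (c) block expression in terms of `v₊` and `Sp(k)`-invariance
    (∀ v : Matrix (Fin n ⊕ Fin n) (Fin k) ℂ,
      momentOstarK n k v = blockMomentK n k (vPlusK n k v)) ∧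
    (∀ H : Matrix (Fin k ⊕ Fin k) (Fin k ⊕ Fin k) ℂ,
      Hᵀ * Jk k * H = Jk k → Hᴴ * H = 1 →
      ∀ v : Matrix (Fin n ⊕ Fin n) (Fin k) ℂ,
        blockMomentK n k (vPlusK n k v * H) = blockMomentK n k (vPlusK n k v)) := by
  refine ⟨part_a n k, part_b n k, ?_, fun H hJ hH v => part_d n k H hJ hH _⟩
  intro v
  have hvp : vPlusK n k v
      = Matrix.fromCols v.toRows₁ (v.toRows₂.map (starRingEnd ℂ)) := by
    ext i (c | c) <;> rfl
  have := part_c n k v.toRows₁ v.toRows₂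
  rw [Matrix.fromRows_toRows] at this
  rw [this, hvp]
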